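/- arXiv:1301.2781 — 6 statements merged into one kernel-verified Lean document; each statement's English description precedes it below -/
import Mathlib

section
/- Let p be a prime, K a field of characteristic p, and α a nonzero element of K. Then for all nonnegative integers k and l, α^{floor((k+l)/p)} · C(k+l, k) = α^{floor(k/p)+floor(l/p)} · C(k+l, k) in K, where C(k+l,k) is reduced modulo p. -/
/-- For a field `K` of characteristic `p`, a nonzero `α : K`, and all `k l : ℕ`,
`α^⌊(k+l)/p⌋ · C(k+l,k) = α^(⌊k/p⌋+⌊l/p⌋) · C(k+l,k)` in `K`. -/
theorem stmt1 (p : ℕ) (hp : p.Prime) (K : Type*) [Field K] [CharP K p]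
    (α : K) (hα : α ≠ 0) (k l : ℕ) :
    α ^ ((k + l) / p) * ((k + l).choose k : K) =
      α ^ (k / p + l / p) * ((k + l).choose k : K) := by
  have hp0 : 0 < p := hp.pos
  rcases lt_or_ge (k % p + l % p) p with h | h
  · rw [Nat.add_div hp0, if_neg (not_le.mpr h), add_zero]
  · -- there is a carry, so the binomial coefficient vanishes mod p
    have : Fact p.Prime := ⟨hp⟩
    have hk : k % p < p := Nat.mod_lt _ hp0
    have hl : l % p < p := Nat.mod_lt _ hp0
    have hmod : (k + l) % p < k % p := by
      rw [Nat.add_mod, Nat.mod_eq_sub_mod h, Nat.mod_eq_of_lt (by omega)]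
      omega
    have hdvd : p ∣ (k + l).choose k := by
      have := Choose.choose_modEq_choose_mod_mul_choose_div_nat (n := k + l) (k := k) (p := p)
      rw [Nat.ModEq, Nat.choose_eq_zero_of_lt hmod, zero_mul, Nat.zero_mod] at this
      exact Nat.dvd_of_mod_eq_zero this
    have hzero : ((k + l).choose k : K) = 0 := (CharP.cast_eq_zero_iff K p _).mpr hdvd
    rw [hzero, mul_zero, mul_zero]
end

section
/- In the Lie algebra g = L ⊗ K[x]/(x²) (notation as above) with the Z-grading deg(e_{i,j}) = j, the 2-cochain c = e_{1,0} ⊗ d(e_{0,1}) ∧ d(e_{1,1}) (i.e., c(e_{0,1}, e_{1,1}) = e_{1,0}, c = 0 on all other basis pairs) is a 2-cocycle with values in the adjoint module which is not a coboundary. -/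
open Finset

/-- Basis index set: pairs `(i,j)` with `i,j ∈ {0,1}`. -/
abbrev Idx := Fin 2 × Fin 2

/-- The bracket of `g = L ⊗ K[x]/(x²)`:
`[e_{i,j}, e_{i',j'}] = (i'-i) e_{i+i',j+j'}` for `i+i' ≤ 1`, `j+j' ≤ 1`, else `0`. -/
noncomputable def br (K : Type*) [Field K] (f g : Idx → K) : Idx → K :=
  fun x => ∑ a : Idx, ∑ b : Idx,
    f a * g b *
      (if a.1.1 + b.1.1 ≤ 1 ∧ a.2.1 + b.2.1 ≤ 1 ∧
          x.1.1 = a.1.1 + b.1.1 ∧ x.2.1 = a.2.1 + b.2.1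
        then ((b.1.1 : K) - (a.1.1 : K)) else 0)

/-- The 2-cochain `c = e_{1,0} ⊗ d(e_{0,1}) ∧ d(e_{1,1})`:
`c(e_{0,1}, e_{1,1}) = e_{1,0}` and `c = 0` on all other basis pairs. -/
noncomputable def coc (K : Type*) [Field K] (f g : Idx → K) : Idx → K :=
  fun x =>
    (f ((0 : Fin 2), (1 : Fin 2)) * g ((1 : Fin 2), (1 : Fin 2))
      - f ((1 : Fin 2), (1 : Fin 2)) * g ((0 : Fin 2), (1 : Fin 2))) *
    (if x = ((1 : Fin 2), (0 : Fin 2)) then 1 else 0)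

set_option maxHeartbeats 1000000 in
/-- `c` is a 2-cocycle with values in the adjoint module
(`dc = 0`) and is not the coboundary of any 1-cochain. -/
theorem stmt4 (K : Type*) [Field K] :
    (∀ x y z : Idx → K,
      br K x (coc K y z) - br K y (coc K x z) + br K z (coc K x y)
        - coc K (br K x y) z + coc K (br K x z) y - coc K (br K y z) x = 0) ∧
    ¬ ∃ φ : (Idx → K) →ₗ[K] (Idx → K),
      ∀ x y : Idx → K,
        coc K x y = br K x (φ y) - br K y (φ x) - φ (br K x y) := by
  constructor
  · intro x y z
    funext p
    obtain ⟨i, j⟩ := p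
    fin_cases i <;> fin_cases j <;>
      simp [br, coc, Fintype.sum_prod_type, Fin.sum_univ_succ, Prod.ext_iff] <;> ring
  · rintro ⟨φ, h⟩
    set u : Idx → K := fun p => if p = ((0:Fin 2),(1:Fin 2)) then 1 else 0 with hu
    set v : Idx → K := fun p => if p = ((1:Fin 2),(1:Fin 2)) then 1 else 0 with hv
    have hbr : br K u v = 0 := by
      funext p
      obtain ⟨i, j⟩ := p
      simp [br, hu, hv, Fintype.sum_prod_type, Fin.sum_univ_succ, Prod.ext_iff]
    have := congrFun (h u v) ((1:Fin 2),(0:Fin 2))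
    rw [hbr, map_zero] at this
    simp [br, coc, hu, hv, Fintype.sum_prod_type, Fin.sum_univ_succ, Prod.ext_iff] at this
end

section
/- Let K be a field of characteristic 2 and g a Lie algebra over K whose underlying space is a commutative associative K-algebra A with bracket [x,y] coming from a biderivation. Let D be a derivation of A which commutes with the bracket-defining derivations and satisfies D² = 0. Then for any ħ ∈ K, the map F_ħ = id + ħD satisfies F_ħ^{-1}([F_ħ(x), F_ħ(y)]) = [x,y] + ħ² [Dx, Dy] for all x, y ∈ A. -/
/-- The map `F_ħ = id + ħ·D`. -/
def Fmap {K A : Type*} [CommRing K] [CommRing A] [Algebra K A]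
    (D : Derivation K A A) (hb : K) (x : A) : A :=
  x + hb • D x

/-- char 2; `g` a Lie algebra whose space is a commutative associative
algebra `A`, with bilinear bracket `br`; `D` a derivation of `A` which is also a
derivation of the bracket and satisfies `D² = 0`.  Then `F_ħ = id + ħD` is its own
inverse and `F_ħ⁻¹([F_ħ x, F_ħ y]) = [x,y] + ħ²[Dx, Dy]`. -/
theorem stmt6 (K A : Type*) [Field K] [CharP K 2] [CommRing A] [Algebra K A]
    (br : A →ₗ[K] A →ₗ[K] A) (D : Derivation K A A)
    (hD : ∀ x y : A, D (br x y) = br (D x) y + br x (D y))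
    (hD2 : ∀ x : A, D (D x) = 0) (hb : K) :
    (∀ x : A, Fmap D hb (Fmap D hb x) = x) ∧
    (∀ x y : A,
      Fmap D hb (br (Fmap D hb x) (Fmap D hb y))
        = br x y + (hb * hb) • br (D x) (D y)) := by
  have h2 : (2 : K) = 0 := by exact_mod_cast CharP.cast_eq_zero K 2
  have hz : ∀ a : A, hb • a + hb • a = 0 := by
    intro a
    rw [← add_smul, ← two_mul, h2, zero_mul, zero_smul]
  constructor
  · intro x
    simp only [Fmap, map_add, Derivation.map_smul, hD2, smul_zero, add_zero]
    rw [add_assoc, hz, add_zero]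
  · intro x y
    simp only [Fmap, map_add, Derivation.map_smul, LinearMap.add_apply,
      LinearMap.smul_apply, map_smul, hD, hD2, LinearMap.map_zero,
      LinearMap.zero_apply, smul_zero, add_zero, zero_add, smul_add, mul_smul]
    rw [show ∀ a b c d : A,
          a + hb • b + (hb • c + hb • d) + (hb • b + hb • c + hb • d + hb • d)
        = a + hb • d + ((hb • b + hb • b) + ((hb • c + hb • c) + (hb • d + hb • d)))
        from fun a b c d => by abel]
    rw [hz, hz, hz, add_zero, add_zero, add_zero]
end

section
/- Over the field F₂, let V be a finite-dimensional vector space with a symmetric bilinear form B, and let Γ ⊆ V \ {0} be a J-system: whenever u, v ∈ Γ are distinct and B(u,v) = 1, then u+v ∈ Γ. Then the algebra g_Γ with basis {e_u : u ∈ Γ} and multiplication [e_u, e_v] = B(u,v) e_{u+v} if u ≠ v and u+v ∈ Γ, and [e_u, e_v] = 0 otherwise, is a Lie algebra, provided B is alternate (B(w,w)=0 for all w). -/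
open Finset

/-- The Kaplansky bracket on the span of `{e_u : u ∈ Γ}`:
`[e_u, e_v] = B(u,v) e_{u+v}` if `u ≠ v` and `u+v ∈ Γ`, and `0` otherwise. -/
def kbr {n : ℕ} (B : (Fin n → ZMod 2) → (Fin n → ZMod 2) → ZMod 2)
    (Γ : Finset (Fin n → ZMod 2))
    (f g : {u // u ∈ Γ} → ZMod 2) : {u // u ∈ Γ} → ZMod 2 :=
  fun w => ∑ u : {u // u ∈ Γ}, ∑ v : {u // u ∈ Γ},
    f u * g v *
      (if (u : Fin n → ZMod 2) ≠ (v : Fin n → ZMod 2) ∧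
          (u : Fin n → ZMod 2) + (v : Fin n → ZMod 2) ∈ Γ ∧
          (w : Fin n → ZMod 2) = (u : Fin n → ZMod 2) + (v : Fin n → ZMod 2)
        then B u v else 0)

/-- The structure-constant coefficient of the Kaplansky bracket. -/
def Tk {n : ℕ} (B : (Fin n → ZMod 2) → (Fin n → ZMod 2) → ZMod 2)
    (Γ : Finset (Fin n → ZMod 2)) (a b w : Fin n → ZMod 2) : ZMod 2 :=
  if a ≠ b ∧ a + b ∈ Γ ∧ w = a + b then B a b else 0

lemma kbr_apply {n : ℕ} (B : (Fin n → ZMod 2) → (Fin n → ZMod 2) → ZMod 2)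
    (Γ : Finset (Fin n → ZMod 2)) (f g : {u // u ∈ Γ} → ZMod 2) (w : {u // u ∈ Γ}) :
    kbr B Γ f g w = ∑ u : {u // u ∈ Γ}, ∑ v : {u // u ∈ Γ},
      f u * g v * Tk B Γ ↑u ↑v ↑w := rfl

lemma Tk_symm {n : ℕ} (B : (Fin n → ZMod 2) → (Fin n → ZMod 2) → ZMod 2)
    (Γ : Finset (Fin n → ZMod 2)) (hsym : ∀ u v, B u v = B v u)
    (a b w : Fin n → ZMod 2) : Tk B Γ a b w = Tk B Γ b a w := by
  unfold Tk
  have hiff : (a ≠ b ∧ a + b ∈ Γ ∧ w = a + b) ↔ (b ≠ a ∧ b + a ∈ Γ ∧ w = b + a) := by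
    constructor <;> rintro ⟨h1, h2, h3⟩ <;>
      exact ⟨h1.symm, by rwa [add_comm], by rwa [add_comm]⟩
  exact if_congr hiff (hsym a b) rfl

lemma sumTk {n : ℕ} (B : (Fin n → ZMod 2) → (Fin n → ZMod 2) → ZMod 2)
    (Γ : Finset (Fin n → ZMod 2)) (a b c w : Fin n → ZMod 2) :
    ∑ x : {u // u ∈ Γ}, Tk B Γ a b ↑x * Tk B Γ ↑x c w
      = Tk B Γ a b (a + b) * Tk B Γ (a + b) c w := by
  by_cases hm : a + b ∈ Γ
  · refine (Fintype.sum_eq_single (⟨a + b, hm⟩ : {u // u ∈ Γ}) fun x hx => ?_).trans rfl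
    have hx' : (x : Fin n → ZMod 2) ≠ a + b := fun h => hx (Subtype.ext h)
    simp [Tk, hx']
  · simp [Tk, hm]

lemma keyB {n : ℕ} (B : LinearMap.BilinForm (ZMod 2) (Fin n → ZMod 2))
    (halt : ∀ w, B w w = 0)
    (Γ : Finset (Fin n → ZMod 2))
    (hJ : ∀ u v, u ∈ Γ → v ∈ Γ → u ≠ v → B u v = 1 → u + v ∈ Γ)
    {a b c : Fin n → ZMod 2} (ha : a ∈ Γ) (hb : b ∈ Γ) (hc : c ∈ Γ)
    (w : Fin n → ZMod 2) :
    Tk (fun u v => B u v) Γ a b (a + b) * Tk (fun u v => B u v) Γ (a + b) c w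
      = if w = a + b + c ∧ a + b + c ≠ 0 then B a b * B (a + b) c else 0 := by
  have addself : ∀ x : Fin n → ZMod 2, x + x = 0 :=
    fun x => funext fun i => CharTwo.add_self_eq_zero (x i)
  have two : ∀ x : ZMod 2, x = 0 ∨ x = 1 := by decide
  by_cases hab : a = b
  · subst hab; simp [Tk, halt]
  rcases two (B a b) with hp | hp
  · simp [Tk, hp]
  · have hmem : a + b ∈ Γ := hJ a b ha hb hab hp
    have h1 : Tk (fun u v => B u v) Γ a b (a + b) = B a b := by
      simp [Tk, hab, hmem]
    rw [h1, hp]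
    simp only [one_mul]
    by_cases h0 : a + b = c
    · have hz : a + b + c = 0 := by rw [h0, addself c]
      simp [Tk, h0, addself]
    · have hne0 : a + b + c ≠ 0 := fun hh => h0 (by
        have h2 : a + b + c + c = 0 + c := by rw [hh]
        rwa [add_assoc, addself c, add_zero, zero_add] at h2)
      rcases two (B (a + b) c) with hq | hq
      · simp only [Tk, hq]
        simp
      · have hmem2 : a + b + c ∈ Γ := hJ (a + b) c hmem hc h0 hq
        by_cases hw : w = a + b + c
        · simp [Tk, h0, hmem2, hw, hne0]
        · simp [Tk, hw]

lemma core {n : ℕ} (B : LinearMap.BilinForm (ZMod 2) (Fin n → ZMod 2))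
    (hsym : ∀ u v, B u v = B v u) (halt : ∀ w, B w w = 0)
    (Γ : Finset (Fin n → ZMod 2))
    (hJ : ∀ u v, u ∈ Γ → v ∈ Γ → u ≠ v → B u v = 1 → u + v ∈ Γ)
    {a b c : Fin n → ZMod 2} (ha : a ∈ Γ) (hb : b ∈ Γ) (hc : c ∈ Γ)
    (w : Fin n → ZMod 2) :
    Tk (fun u v => B u v) Γ a b (a + b) * Tk (fun u v => B u v) Γ (a + b) c w
      + Tk (fun u v => B u v) Γ b c (b + c) * Tk (fun u v => B u v) Γ (b + c) a w
      + Tk (fun u v => B u v) Γ c a (c + a) * Tk (fun u v => B u v) Γ (c + a) b w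
      = 0 := by
  rw [keyB B halt Γ hJ ha hb hc w, keyB B halt Γ hJ hb hc ha w, keyB B halt Γ hJ hc ha hb w]
  have e1 : b + c + a = a + b + c := by ring
  have e2 : c + a + b = a + b + c := by ring
  rw [e1, e2]
  by_cases hw : w = a + b + c ∧ a + b + c ≠ 0
  · rw [if_pos hw, if_pos hw, if_pos hw]
    have h1 : B (a + b) c = B a c + B b c := by
      rw [map_add]; rfl
    have h2 : B (b + c) a = B b a + B c a := by
      rw [map_add]; rfl
    have h3 : B (c + a) b = B c b + B a b := by
      rw [map_add]; rfl
    rw [h1, h2, h3, hsym b a, hsym c a, hsym c b]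
    have key : ∀ p q r : ZMod 2,
        p * (r + q) + q * (p + r) + r * (q + p) = 0 := by decide
    exact key (B a b) (B b c) (B a c)
  · rw [if_neg hw, if_neg hw, if_neg hw]; ring

lemma kbr_kbr {n : ℕ} (B : (Fin n → ZMod 2) → (Fin n → ZMod 2) → ZMod 2)
    (Γ : Finset (Fin n → ZMod 2)) (f g h : {u // u ∈ Γ} → ZMod 2)
    (w : {u // u ∈ Γ}) :
    kbr B Γ (kbr B Γ f g) h w
      = ∑ a : {u // u ∈ Γ}, ∑ b : {u // u ∈ Γ}, ∑ c : {u // u ∈ Γ},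
          f a * g b * h c *
            (Tk B Γ ↑a ↑b (↑a + ↑b) * Tk B Γ (↑a + ↑b) ↑c ↑w) := by
  show (∑ x : {u // u ∈ Γ}, ∑ c : {u // u ∈ Γ},
      (∑ a : {u // u ∈ Γ}, ∑ b : {u // u ∈ Γ}, f a * g b * Tk B Γ ↑a ↑b ↑x)
        * h c * Tk B Γ ↑x ↑c ↑w) = _
  simp only [Finset.sum_mul]
  rw [Finset.sum_comm]
  rw [Finset.sum_congr rfl fun _ _ => Finset.sum_comm]
  rw [Finset.sum_congr rfl fun _ _ => Finset.sum_congr rfl fun _ _ => Finset.sum_comm]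
  rw [Finset.sum_comm]
  rw [Finset.sum_congr rfl fun _ _ => Finset.sum_comm]
  refine Finset.sum_congr rfl fun a _ => Finset.sum_congr rfl fun b _ =>
    Finset.sum_congr rfl fun c _ => ?_
  rw [← sumTk B Γ ↑a ↑b ↑c ↑w, Finset.mul_sum]
  exact Finset.sum_congr rfl fun x _ => by ring

/-- for an alternate symmetric bilinear form `B` on a finite-dimensional
`F₂`-space and a J-system `Γ` (a set of nonzero vectors such that `u+v ∈ Γ` whenever
`u, v ∈ Γ` are distinct with `B(u,v) = 1`), the algebra `g_Γ` is a Lie algebra. -/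
theorem stmt7 {n : ℕ} (B : LinearMap.BilinForm (ZMod 2) (Fin n → ZMod 2))
    (hsym : ∀ u v, B u v = B v u) (halt : ∀ w, B w w = 0)
    (Γ : Finset (Fin n → ZMod 2)) (h0 : (0 : Fin n → ZMod 2) ∉ Γ)
    (hJ : ∀ u v, u ∈ Γ → v ∈ Γ → u ≠ v → B u v = 1 → u + v ∈ Γ) :
    (∀ f : {u // u ∈ Γ} → ZMod 2, kbr (fun u v => B u v) Γ f f = 0) ∧
    (∀ f g h : {u // u ∈ Γ} → ZMod 2,
      kbr (fun u v => B u v) Γ (kbr (fun u v => B u v) Γ f g) h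
        + kbr (fun u v => B u v) Γ (kbr (fun u v => B u v) Γ g h) f
        + kbr (fun u v => B u v) Γ (kbr (fun u v => B u v) Γ h f) g = 0) := by
  have hsym' : ∀ u v, (fun u v => B u v) u v = (fun u v => B u v) v u := hsym
  constructor
  · intro f
    funext w
    simp only [Pi.zero_apply]
    rw [kbr_apply]
    rw [show (∑ u : {u // u ∈ Γ}, ∑ v : {u // u ∈ Γ},
        f u * f v * Tk (fun u v => B u v) Γ ↑u ↑v ↑w)
      = ∑ p : {u // u ∈ Γ} × {u // u ∈ Γ},
          f p.1 * f p.2 * Tk (fun u v => B u v) Γ ↑p.1 ↑p.2 ↑w from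
      (Fintype.sum_prod_type (f := fun p : {u // u ∈ Γ} × {u // u ∈ Γ} =>
        f p.1 * f p.2 * Tk (fun u v => B u v) Γ ↑p.1 ↑p.2 ↑w)).symm]
    refine Finset.sum_involution (fun p _ => (p.2, p.1)) ?_ ?_
      (fun p _ => Finset.mem_univ _) (fun p _ => rfl)
    · intro p _
      dsimp only
      rw [Tk_symm _ Γ hsym' ↑p.2 ↑p.1 ↑w, mul_comm (f p.2) (f p.1)]
      exact (by decide : ∀ z : ZMod 2, z + z = 0) _
    · rintro ⟨u, v⟩ _ hF heq
      apply hF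
      have huv : v = u := (Prod.mk.injEq _ _ _ _).mp heq |>.1
      subst huv
      simp [Tk]
  · intro f g h
    funext w
    simp only [Pi.add_apply, Pi.zero_apply]
    rw [kbr_kbr, kbr_kbr, kbr_kbr]
    have e2 : (∑ x : {u // u ∈ Γ}, ∑ y : {u // u ∈ Γ}, ∑ z : {u // u ∈ Γ},
          g x * h y * f z *
            (Tk (fun u v => B u v) Γ ↑x ↑y (↑x + ↑y)
              * Tk (fun u v => B u v) Γ (↑x + ↑y) ↑z ↑w))
        = ∑ a : {u // u ∈ Γ}, ∑ b : {u // u ∈ Γ}, ∑ c : {u // u ∈ Γ},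
            f a * g b * h c *
              (Tk (fun u v => B u v) Γ ↑b ↑c (↑b + ↑c)
                * Tk (fun u v => B u v) Γ (↑b + ↑c) ↑a ↑w) := by
      rw [Finset.sum_congr rfl fun _ _ => Finset.sum_comm]
      rw [Finset.sum_comm]
      exact Finset.sum_congr rfl fun a _ => Finset.sum_congr rfl fun b _ =>
        Finset.sum_congr rfl fun c _ => by ring
    have e3 : (∑ x : {u // u ∈ Γ}, ∑ y : {u // u ∈ Γ}, ∑ z : {u // u ∈ Γ},
          h x * f y * g z *
            (Tk (fun u v => B u v) Γ ↑x ↑y (↑x + ↑y)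
              * Tk (fun u v => B u v) Γ (↑x + ↑y) ↑z ↑w))
        = ∑ a : {u // u ∈ Γ}, ∑ b : {u // u ∈ Γ}, ∑ c : {u // u ∈ Γ},
            f a * g b * h c *
              (Tk (fun u v => B u v) Γ ↑c ↑a (↑c + ↑a)
                * Tk (fun u v => B u v) Γ (↑c + ↑a) ↑b ↑w) := by
      rw [Finset.sum_comm]
      rw [Finset.sum_congr rfl fun _ _ => Finset.sum_comm]
      exact Finset.sum_congr rfl fun a _ => Finset.sum_congr rfl fun b _ =>
        Finset.sum_congr rfl fun c _ => by ring
    rw [e2, e3]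
    rw [← Finset.sum_add_distrib, ← Finset.sum_add_distrib]
    refine Finset.sum_eq_zero fun a _ => ?_
    rw [← Finset.sum_add_distrib, ← Finset.sum_add_distrib]
    refine Finset.sum_eq_zero fun b _ => ?_
    rw [← Finset.sum_add_distrib, ← Finset.sum_add_distrib]
    refine Finset.sum_eq_zero fun c _ => ?_
    have hcore := core B hsym halt Γ hJ a.2 b.2 c.2 ↑w
    linear_combination (f a * g b * h c) * hcore
end

section
/- Let V be a finite-dimensional F₂-vector space with a non-degenerate alternate symmetric bilinear form B, Γ a J-system in V, and g_Γ the associated Kaplansky Lie algebra with basis {e_u : u ∈ Γ}. Then the symmetric bilinear form K on g_Γ defined by K(e_u, e_v) = δ_{u,v} is invariant: K([e_u, e_z], e_v) = K(e_u, [e_z, e_v]) for all u, z, v ∈ Γ. -/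
open Finset

/-- The basis vector `e_u`. -/
def ebase {n : ℕ} (Γ : Finset (Fin n → ZMod 2)) (u : {u // u ∈ Γ}) :
    {u // u ∈ Γ} → ZMod 2 :=
  fun w => if w = u then 1 else 0

/-- The form `K(e_u, e_v) = δ_{u,v}`, extended bilinearly. -/
def Kform {n : ℕ} (Γ : Finset (Fin n → ZMod 2))
    (f g : {u // u ∈ Γ} → ZMod 2) : ZMod 2 :=
  ∑ w : {u // u ∈ Γ}, f w * g w

/-- the form `K(e_u,e_v) = δ_{u,v}` on the Kaplansky algebra of a
J-system `Γ` for a non-degenerate alternate symmetric bilinear form `B` is invariant: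
`K([e_u,e_z],e_v) = K(e_u,[e_z,e_v])`. -/
theorem stmt8 {n : ℕ} (B : LinearMap.BilinForm (ZMod 2) (Fin n → ZMod 2))
    (hsym : ∀ u v, B u v = B v u) (halt : ∀ w, B w w = 0)
    (hnd : ∀ u, (∀ v, B u v = 0) → u = 0)
    (Γ : Finset (Fin n → ZMod 2)) (h0 : (0 : Fin n → ZMod 2) ∉ Γ)
    (hJ : ∀ u v, u ∈ Γ → v ∈ Γ → u ≠ v → B u v = 1 → u + v ∈ Γ)
    (u z v : {u // u ∈ Γ}) :
    Kform Γ (kbr (fun a b => B a b) Γ (ebase Γ u) (ebase Γ z)) (ebase Γ v)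
      = Kform Γ (ebase Γ u) (kbr (fun a b => B a b) Γ (ebase Γ z) (ebase Γ v)) := by
  have hself : ∀ x : Fin n → ZMod 2, x + x = 0 := fun x => by
    ext i; exact CharTwo.add_self_eq_zero _
  have key : ∀ (a b w : {u // u ∈ Γ}),
      kbr (fun a b => B a b) Γ (ebase Γ a) (ebase Γ b) w =
      (if (a : Fin n → ZMod 2) ≠ (b : Fin n → ZMod 2) ∧
          (a : Fin n → ZMod 2) + (b : Fin n → ZMod 2) ∈ Γ ∧
          (w : Fin n → ZMod 2) = (a : Fin n → ZMod 2) + (b : Fin n → ZMod 2)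
        then B a b else 0) := by
    intro a b w
    unfold kbr ebase
    rw [Fintype.sum_eq_single a (by intro x hx; simp [hx])]
    rw [Fintype.sum_eq_single b (by intro x hx; simp [hx])]
    simp
  have hK : ∀ (f : {u // u ∈ Γ} → ZMod 2) (a : {u // u ∈ Γ}),
      Kform Γ f (ebase Γ a) = f a := by
    intro f a
    unfold Kform ebase
    simp [mul_ite, Fintype.sum_ite_eq']
  have hK' : ∀ (f : {u // u ∈ Γ} → ZMod 2) (a : {u // u ∈ Γ}),
      Kform Γ (ebase Γ a) f = f a := by
    intro f a
    unfold Kform ebase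
    simp [ite_mul, Fintype.sum_ite_eq']
  rw [hK, hK', key, key]
  by_cases h1 : (u : Fin n → ZMod 2) ≠ (z : Fin n → ZMod 2) ∧
      (u : Fin n → ZMod 2) + (z : Fin n → ZMod 2) ∈ Γ ∧
      (v : Fin n → ZMod 2) = (u : Fin n → ZMod 2) + (z : Fin n → ZMod 2)
  · obtain ⟨hne, hmem, hv⟩ := h1
    have hu : (u : Fin n → ZMod 2) = (z : Fin n → ZMod 2) + (v : Fin n → ZMod 2) := by
      rw [hv]; rw [show (z:Fin n → ZMod 2) + ((u:Fin n → ZMod 2) + z) = (u:Fin n → ZMod 2) + (z + z) by ring, hself, add_zero]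
    have hzv : (z : Fin n → ZMod 2) ≠ (v : Fin n → ZMod 2) := by
      intro h
      apply h0
      have : (u : Fin n → ZMod 2) = 0 := by rw [hu, ← h, hself]
      rw [← this]; exact u.2
    have hzvmem : (z : Fin n → ZMod 2) + (v : Fin n → ZMod 2) ∈ Γ := by
      rw [← hu]; exact u.2
    rw [if_pos ⟨hne, hmem, hv⟩, if_pos ⟨hzv, hzvmem, hu⟩]
    rw [hv, map_add, halt, add_zero, hsym]
  · rw [if_neg h1, if_neg]
    intro ⟨hzv, hmem, hu⟩
    apply h1
    have hv : (v : Fin n → ZMod 2) = (u : Fin n → ZMod 2) + (z : Fin n → ZMod 2) := by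
      rw [hu]; rw [show (z:Fin n → ZMod 2) + v + z = (v:Fin n → ZMod 2) + (z + z) by ring, hself, add_zero]
    refine ⟨?_, by rw [← hv]; exact v.2, hv⟩
    intro h
    apply h0
    have : (v : Fin n → ZMod 2) = 0 := by rw [hv, ← h, hself]
    rw [← this]; exact v.2
end

section
/- Let K be a field of characteristic 2, m ≥ 1, and let O be the truncated polynomial algebra K[p₁,…,p_m,q₁,…,q_m]/(p_i², q_i²). Then the bracket [f,g] = Σ_{i=1}^m (1+p_i)(1+q_i)(∂_{p_i}f · ∂_{q_i}g + ∂_{q_i}f · ∂_{p_i}g) defines a Lie algebra structure on O. -/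
open Finset

/-- Exponent multi-indices for the truncated polynomial algebra
`K[p₁,…,p_m,q₁,…,q_m]/(pᵢ²,qᵢ²)`: a monomial is a pair of subsets of `{1,…,m}`. -/
abbrev Expo (m : ℕ) := (Fin m → Bool) × (Fin m → Bool)

/-- The truncated polynomial algebra, as the space of coefficient functions. -/
abbrev TO (K : Type*) (m : ℕ) := Expo m → K

set_option linter.unusedSectionVars false
set_option linter.unusedVariables false

variable {K : Type*} [Field K] {m : ℕ}

/-- Multiplication of truncated polynomials: monomials multiply iff their supports
are disjoint, and then supports unite. -/
def mulO (f g : TO K m) : TO K m := fun e =>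
  ∑ a : Expo m, ∑ b : Expo m,
    if (∀ i, ¬(a.1 i = true ∧ b.1 i = true) ∧ ((a.1 i = true ∨ b.1 i = true) ↔ e.1 i = true)
          ∧ ¬(a.2 i = true ∧ b.2 i = true) ∧ ((a.2 i = true ∨ b.2 i = true) ↔ e.2 i = true))
      then f a * g b else 0

/-- The partial derivative `∂_{p_i}`. -/
def dp (i : Fin m) (f : TO K m) : TO K m := fun e =>
  if e.1 i = false then f (Function.update e.1 i true, e.2) else 0

/-- The partial derivative `∂_{q_i}`. -/
def dq (i : Fin m) (f : TO K m) : TO K m := fun e =>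
  if e.2 i = false then f (e.1, Function.update e.2 i true) else 0

/-- Multiplication by `1 + p_i`. -/
def mp (i : Fin m) (f : TO K m) : TO K m := fun e =>
  f e + if e.1 i = true then f (Function.update e.1 i false, e.2) else 0

/-- Multiplication by `1 + q_i`. -/
def mq (i : Fin m) (f : TO K m) : TO K m := fun e =>
  f e + if e.2 i = true then f (e.1, Function.update e.2 i false) else 0

/-- The bracket `[f,g] = Σᵢ (1+pᵢ)(1+qᵢ)(∂_{pᵢ}f·∂_{qᵢ}g + ∂_{qᵢ}f·∂_{pᵢ}g)`. -/
def br13 (f g : TO K m) : TO K m :=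
  ∑ i : Fin m, mp i (mq i (mulO (dp i f) (dq i g) + mulO (dq i f) (dp i g)))

/-! ### combinatorial preliminaries -/

def leE (a e : Expo m) : Prop :=
  ∀ i, (a.1 i = true → e.1 i = true) ∧ (a.2 i = true → e.2 i = true)

instance (a e : Expo m) : Decidable (leE a e) := by unfold leE; infer_instance

def subE (e a : Expo m) : Expo m :=
  (fun i => e.1 i && !(a.1 i), fun i => e.2 i && !(a.2 i))

def unionE (a b : Expo m) : Expo m :=
  (fun i => a.1 i || b.1 i, fun i => a.2 i || b.2 i)

lemma coordP : ∀ (x y z x2 y2 z2 : Bool),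
    (¬(x = true ∧ y = true) ∧ ((x = true ∨ y = true) ↔ z = true)
      ∧ ¬(x2 = true ∧ y2 = true) ∧ ((x2 = true ∨ y2 = true) ↔ z2 = true))
    ↔ (((x = true → z = true) ∧ (x2 = true → z2 = true))
        ∧ (y = (z && !x) ∧ y2 = (z2 && !x2))) := by decide

lemma P_iff (a b e : Expo m) :
    (∀ i, ¬(a.1 i = true ∧ b.1 i = true) ∧ ((a.1 i = true ∨ b.1 i = true) ↔ e.1 i = true)
          ∧ ¬(a.2 i = true ∧ b.2 i = true) ∧ ((a.2 i = true ∨ b.2 i = true) ↔ e.2 i = true))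
    ↔ (leE a e ∧ b = subE e a) := by
  have h : ∀ i, (¬(a.1 i = true ∧ b.1 i = true) ∧ ((a.1 i = true ∨ b.1 i = true) ↔ e.1 i = true)
          ∧ ¬(a.2 i = true ∧ b.2 i = true) ∧ ((a.2 i = true ∨ b.2 i = true) ↔ e.2 i = true))
      ↔ (((a.1 i = true → e.1 i = true) ∧ (a.2 i = true → e.2 i = true))
          ∧ (b.1 i = (e.1 i && !(a.1 i)) ∧ b.2 i = (e.2 i && !(a.2 i)))) :=
    fun i => coordP _ _ _ _ _ _
  rw [forall_congr' h, forall_and]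
  constructor
  · rintro ⟨h1, h2⟩
    refine ⟨h1, Prod.ext ?_ ?_⟩ <;> funext i
    · exact (h2 i).1
    · exact (h2 i).2
  · rintro ⟨h1, h2⟩
    refine ⟨h1, fun i => ?_⟩
    constructor
    · exact congrFun (congrArg Prod.fst h2) i
    · exact congrFun (congrArg Prod.snd h2) i

lemma mulO_le (f g : TO K m) (e : Expo m) :
    mulO f g e = ∑ a : Expo m, if leE a e then f a * g (subE e a) else 0 := by
  unfold mulO
  refine Finset.sum_congr rfl fun a _ => ?_
  by_cases hq : leE a e
  · rw [if_pos hq, Finset.sum_eq_single (subE e a)]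
    · rw [if_pos]; rw [P_iff]; exact ⟨hq, rfl⟩
    · intro b _ hb
      rw [if_neg]; rw [P_iff]; rintro ⟨-, h⟩; exact hb h
    · intro h; exact absurd (Finset.mem_univ _) h
  · rw [if_neg hq]
    refine Finset.sum_eq_zero fun b _ => ?_
    rw [if_neg]; rw [P_iff]; rintro ⟨h, -⟩; exact hq h

/-! ### boolean helpers -/

lemma bsub_union : ∀ x y : Bool, (x = true → y = true) → (x || (y && !x)) = y := by decide
lemma bunion_sub : ∀ x y : Bool, (y = true → x = false) → ((x || y) && !x) = y := by decide

lemma leE_refl_sub (a e : Expo m) : leE (subE e a) e := by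
  intro i; constructor <;> intro h <;> simp [subE] at h <;> exact h.1

lemma bsub_sub : ∀ x y : Bool, (x = true → y = true) → (y && !(y && !x)) = x := by decide

lemma subE_subE (e a : Expo m) (h : leE a e) : subE e (subE e a) = a := by
  unfold subE
  refine Prod.ext ?_ ?_ <;> funext i <;> simp only
  · exact bsub_sub _ _ (h i).1
  · exact bsub_sub _ _ (h i).2

lemma mulO_comm (f g : TO K m) : mulO f g = mulO g f := by
  funext e
  unfold mulO
  rw [Finset.sum_comm]
  refine Finset.sum_congr rfl fun a _ => Finset.sum_congr rfl fun b _ => ?_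
  refine if_congr ?_ (mul_comm _ _) rfl
  constructor <;> intro h i <;> rcases h i with ⟨h1, h2, h3, h4⟩ <;>
    exact ⟨fun hc => h1 ⟨hc.2, hc.1⟩, (or_comm).trans h2, fun hc => h3 ⟨hc.2, hc.1⟩,
      (or_comm).trans h4⟩

/-! ### associativity -/

lemma leE_trans {a b c : Expo m} (h1 : leE a b) (h2 : leE b c) : leE a c :=
  fun i => ⟨fun h => (h2 i).1 ((h1 i).1 h), fun h => (h2 i).2 ((h1 i).2 h)⟩

lemma bmono : ∀ x y z : Bool, (x = true → y = true) → ((x && !z) = true → (y && !z) = true) := by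
  decide
lemma bunion_le : ∀ c d e : Bool, (c = true → e = true) → (d = true → (e && !c) = true) →
    ((c || d) = true → e = true) := by decide
lemma bsub_union' : ∀ x y z : Bool, (y = true → (z && !x) = true) → ((x || y) && !x) = y := by
  decide
lemma bsub_sub2 : ∀ x y z : Bool, (z && !(x || y)) = ((z && !x) && !y) := by decide

lemma leE_sub_mono {a e : Expo m} (c : Expo m) (h : leE a e) : leE (subE a c) (subE e c) :=
  fun i => ⟨bmono _ _ _ (h i).1, bmono _ _ _ (h i).2⟩

lemma leE_left_union (c d : Expo m) : leE c (unionE c d) := by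
  intro i; constructor <;> intro h <;> simp [unionE, h]

lemma leE_unionE {c d e : Expo m} (h1 : leE c e) (h2 : leE d (subE e c)) :
    leE (unionE c d) e :=
  fun i => ⟨bunion_le _ _ _ (h1 i).1 (h2 i).1, bunion_le _ _ _ (h1 i).2 (h2 i).2⟩

lemma subE_unionE {c d e : Expo m} (h2 : leE d (subE e c)) : subE (unionE c d) c = d := by
  unfold subE unionE
  refine Prod.ext ?_ ?_ <;> funext i <;> simp only
  · exact bsub_union' _ _ (e.1 i) (h2 i).1
  · exact bsub_union' _ _ (e.2 i) (h2 i).2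

lemma subE_subE2 (e c d : Expo m) : subE e (unionE c d) = subE (subE e c) d := by
  unfold subE unionE
  refine Prod.ext ?_ ?_ <;> funext i <;> simp only <;> apply bsub_sub2

lemma unionE_subE {c a : Expo m} (h : leE c a) : unionE c (subE a c) = a := by
  unfold subE unionE
  refine Prod.ext ?_ ?_ <;> funext i <;> simp only
  · exact bsub_union _ _ (h i).1
  · exact bsub_union _ _ (h i).2

lemma inner_reindex (c e : Expo m) (φ : Expo m → K) :
    (∑ a : Expo m, if leE a e ∧ leE c a then φ a else 0)
    = ∑ d : Expo m, if leE c e ∧ leE d (subE e c) then φ (unionE c d) else 0 := by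
  classical
  rw [← Finset.sum_filter, ← Finset.sum_filter]
  refine Finset.sum_nbij' (fun a => subE a c) (fun d => unionE c d) ?_ ?_ ?_ ?_ ?_
  · intro a ha
    simp only [Finset.mem_filter, Finset.mem_univ, true_and] at ha ⊢
    exact ⟨leE_trans ha.2 ha.1, leE_sub_mono c ha.1⟩
  · intro d hd
    simp only [Finset.mem_filter, Finset.mem_univ, true_and] at hd ⊢
    exact ⟨leE_unionE hd.1 hd.2, leE_left_union c d⟩
  · intro a ha
    simp only [Finset.mem_filter, Finset.mem_univ, true_and] at ha
    exact unionE_subE ha.2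
  · intro d hd
    simp only [Finset.mem_filter, Finset.mem_univ, true_and] at hd
    exact subE_unionE hd.2
  · intro a ha
    simp only [Finset.mem_filter, Finset.mem_univ, true_and] at ha
    rw [unionE_subE ha.2]

lemma mulO_assoc (f g h : TO K m) : mulO (mulO f g) h = mulO f (mulO g h) := by
  classical
  funext e
  have L : mulO (mulO f g) h e
      = ∑ c : Expo m, ∑ a : Expo m,
          (if leE a e ∧ leE c a then f c * g (subE a c) * h (subE e a) else 0) := by
    rw [mulO_le]
    rw [show (∑ a : Expo m, if leE a e then mulO f g a * h (subE e a) else 0)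
        = ∑ a : Expo m, ∑ c : Expo m,
            (if leE a e ∧ leE c a then f c * g (subE a c) * h (subE e a) else 0) from
      Finset.sum_congr rfl fun a _ => by
        by_cases h1 : leE a e
        · rw [if_pos h1, mulO_le, Finset.sum_mul]
          exact Finset.sum_congr rfl fun c _ => by
            by_cases h2 : leE c a <;> simp [h1, h2]
        · simp [h1]]
    exact Finset.sum_comm
  rw [L]
  have R : mulO f (mulO g h) e
      = ∑ c : Expo m, ∑ d : Expo m,
          (if leE c e ∧ leE d (subE e c)
            then f c * (g d * h (subE (subE e c) d)) else 0) := by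
    rw [mulO_le]
    refine Finset.sum_congr rfl fun c _ => ?_
    by_cases h1 : leE c e
    · rw [if_pos h1, mulO_le, Finset.mul_sum]
      exact Finset.sum_congr rfl fun d _ => by
        by_cases h2 : leE d (subE e c) <;> simp [h1, h2]
    · simp [h1]
  rw [R]
  refine Finset.sum_congr rfl fun c _ => ?_
  rw [inner_reindex]
  refine Finset.sum_congr rfl fun d _ => ?_
  by_cases hc : leE c e ∧ leE d (subE e c)
  · rw [if_pos hc, if_pos hc, subE_unionE hc.2, subE_subE2, mul_assoc]
  · rw [if_neg hc, if_neg hc]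

/-! ### ring structure ingredients -/

def e0 : Expo m := (fun _ => false, fun _ => false)

def indic (a : Expo m) : TO K m := fun e => if e = a then 1 else 0

def oneO : TO K m := indic e0

lemma leE_zero (e : Expo m) : leE (e0 : Expo m) e := by
  intro i; constructor <;> intro h <;> simp [e0] at h

lemma subE_zero (e : Expo m) : subE e e0 = e := by
  unfold subE e0
  refine Prod.ext ?_ ?_ <;> funext i <;> simp

lemma mulO_add_left (f f' g : TO K m) : mulO (f + f') g = mulO f g + mulO f' g := by
  funext e
  rw [Pi.add_apply, mulO_le, mulO_le, mulO_le, ← Finset.sum_add_distrib]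
  refine Finset.sum_congr rfl fun a _ => ?_
  by_cases h1 : leE a e <;> simp [h1, add_mul]

lemma mulO_add_right (f g g' : TO K m) : mulO f (g + g') = mulO f g + mulO f g' := by
  rw [mulO_comm, mulO_add_left, mulO_comm g f, mulO_comm g' f]

lemma mulO_zero_left (g : TO K m) : mulO 0 g = 0 := by
  funext e; rw [mulO_le]; simp

lemma mulO_zero_right (f : TO K m) : mulO f 0 = 0 := by
  rw [mulO_comm, mulO_zero_left]

lemma mulO_indic (a : Expo m) (f : TO K m) (e : Expo m) :
    mulO (indic a) f e = if leE a e then f (subE e a) else 0 := by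
  classical
  rw [mulO_le, Finset.sum_eq_single a]
  · by_cases h1 : leE a e <;> simp [h1, indic]
  · intro b _ hb
    simp [indic, hb]
  · intro hb; exact absurd (Finset.mem_univ _) hb

lemma mulO_one_left (f : TO K m) : mulO oneO f = f := by
  funext e
  rw [oneO, mulO_indic, if_pos (leE_zero e), subE_zero]

lemma mulO_one_right (f : TO K m) : mulO f oneO = f := by
  rw [mulO_comm, mulO_one_left]

/-! ### the algebra as a commutative ring (type synonym) -/

def OA (K : Type*) (m : ℕ) : Type _ := TO K m

instance : AddCommGroup (OA K m) := inferInstanceAs (AddCommGroup (TO K m))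

instance : CommRing (OA K m) :=
  { (inferInstanceAs (AddCommGroup (OA K m)) : AddCommGroup (OA K m)) with
    mul := fun f g => (mulO f g : TO K m)
    mul_assoc := mulO_assoc
    one := (oneO : TO K m)
    one_mul := mulO_one_left
    mul_one := mulO_one_right
    left_distrib := fun a b c => mulO_add_right a b c
    right_distrib := fun a b c => mulO_add_left a b c
    zero_mul := mulO_zero_left
    mul_zero := mulO_zero_right
    mul_comm := mulO_comm }

lemma OA.mul_def (f g : OA K m) : f * g = mulO f g := rfl

lemma OA.add_self [CharP K 2] (x : OA K m) : x + x = 0 := by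
  funext e
  show (x e) + (x e) = 0
  rw [← two_mul, show (2 : K) = 0 from CharP.cast_eq_zero K 2, zero_mul]

/-! ### derivations -/

def SW (f : TO K m) : TO K m := fun e => f (e.2, e.1)

def swE (e : Expo m) : Expo m := (e.2, e.1)

lemma SW_SW (f : TO K m) : SW (SW f) = f := rfl

lemma dq_eq_SW (i : Fin m) (f : TO K m) : dq i f = SW (dp i (SW f)) := rfl

lemma mq_eq_SW (i : Fin m) (f : TO K m) : mq i f = SW (mp i (SW f)) := rfl

lemma SW_add (f g : TO K m) : SW (f + g) = SW f + SW g := rfl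

lemma swE_invol : Function.Involutive (swE (m := m)) := fun _ => rfl

lemma SW_mul (f g : TO K m) : SW (mulO f g) = mulO (SW f) (SW g) := by
  funext e
  show mulO f g (e.2, e.1) = mulO (SW f) (SW g) e
  unfold mulO
  rw [← Equiv.sum_comp (Function.Involutive.toPerm _ swE_invol)
    (fun a => ∑ b : Expo m, _)]
  refine Finset.sum_congr rfl fun a _ => ?_
  rw [← Equiv.sum_comp (Function.Involutive.toPerm _ swE_invol)]
  refine Finset.sum_congr rfl fun b _ => ?_
  show (if _ then f (swE a) * g (swE b) else 0) = _
  refine if_congr ?_ rfl rfl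
  constructor <;> intro h i <;>
    exact ⟨(h i).2.2.1, (h i).2.2.2, (h i).1, (h i).2.1⟩

lemma dp_add (i : Fin m) (f g : TO K m) : dp i (f + g) = dp i f + dp i g := by
  funext e
  show _ = dp i f e + dp i g e
  unfold dp
  split <;> simp

lemma dq_add (i : Fin m) (f g : TO K m) : dq i (f + g) = dq i f + dq i g := by
  rw [dq_eq_SW, SW_add, dp_add, SW_add]; rfl

lemma dp_zero (i : Fin m) : dp i (0 : TO K m) = 0 := by
  funext e; unfold dp; split <;> rfl

lemma dq_zero (i : Fin m) : dq i (0 : TO K m) = 0 := by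
  funext e; unfold dq; split <;> rfl

lemma dp_dp (i : Fin m) (f : TO K m) : dp i (dp i f) = 0 := by
  funext e
  unfold dp
  by_cases h : e.1 i = false <;> simp [h]

lemma dq_dq (i : Fin m) (f : TO K m) : dq i (dq i f) = 0 := by
  rw [dq_eq_SW, dq_eq_SW, SW_SW, dp_dp]; rfl

lemma dp_dq_comm (i j : Fin m) (f : TO K m) : dp i (dq j f) = dq j (dp i f) := by
  funext e
  unfold dp dq
  by_cases h1 : e.1 i = false <;> by_cases h2 : e.2 j = false <;> simp [h1, h2]

lemma dp_dp_comm (i j : Fin m) (f : TO K m) : dp i (dp j f) = dp j (dp i f) := by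
  by_cases hij : i = j
  · subst hij; rfl
  · funext e
    unfold dp
    by_cases h1 : e.1 i = false <;> by_cases h2 : e.1 j = false <;>
      simp [h1, h2, Function.update_of_ne (Ne.symm hij), Function.update_of_ne hij,
        Function.update_comm hij]

lemma dq_dq_comm (i j : Fin m) (f : TO K m) : dq i (dq j f) = dq j (dq i f) := by
  show SW (dp i (SW (SW (dp j (SW f))))) = SW (dp j (SW (SW (dp i (SW f)))))
  rw [SW_SW, SW_SW, dp_dp_comm]

/-! ### Leibniz rule -/

def u1 (i : Fin m) (e : Expo m) : Expo m := (Function.update e.1 i true, e.2)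

def fl1 (i : Fin m) (e : Expo m) : Expo m := (Function.update e.1 i (!(e.1 i)), e.2)

lemma fl1_invol (i : Fin m) : Function.Involutive (fl1 (m := m) i) := by
  intro e
  unfold fl1
  refine Prod.ext ?_ rfl
  funext j
  by_cases hj : j = i
  · subst hj; simp
  · simp [Function.update_of_ne hj]

lemma sum_fl1 (i : Fin m) (F : Expo m → K) : (∑ e : Expo m, F (fl1 i e)) = ∑ e : Expo m, F e :=
  Equiv.sum_comp (Function.Involutive.toPerm _ (fl1_invol i)) F

lemma fl1_of_false {i : Fin m} {a : Expo m} (h : a.1 i = false) : fl1 i a = u1 i a := by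
  unfold fl1 u1; rw [h]; rfl

lemma fl1_fst {i : Fin m} (a : Expo m) : (fl1 i a).1 i = !(a.1 i) := by
  unfold fl1; simp

lemma u1_fst {i : Fin m} (a : Expo m) : (u1 i a).1 i = true := by
  unfold u1; simp

lemma u1_fst_ne {i j : Fin m} (h : j ≠ i) (a : Expo m) : (u1 i a).1 j = a.1 j := by
  unfold u1; simp [Function.update_of_ne h]

lemma leE_u1_iff {i : Fin m} {a e : Expo m} (he : e.1 i = true) :
    leE (u1 i a) e ↔ leE a e := by
  constructor <;> intro h j <;> refine ⟨fun hj => ?_, (h j).2⟩ <;> by_cases hji : j = i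
  · subst hji; exact he
  · exact (h j).1 (by rw [u1_fst_ne hji]; exact hj)
  · subst hji; exact he
  · refine (h j).1 ?_; rw [u1_fst_ne hji] at hj; exact hj

lemma subE_u1_fst {i : Fin m} (e a : Expo m) : (subE e (u1 i a)).1 i = false := by
  unfold subE; simp [u1_fst]

lemma subE_snd (e a : Expo m) (j : Fin m) : (subE e a).2 j = (e.2 j && !(a.2 j)) := rfl

lemma u1_subE_u1 {i : Fin m} {a e : Expo m} (ha : a.1 i = false) (he : e.1 i = true) :
    u1 i (subE e (u1 i a)) = subE e a := by
  unfold u1 subE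
  refine Prod.ext ?_ ?_ <;> funext j <;> simp only
  · by_cases hj : j = i
    · subst hj; simp [ha, he]
    · simp [Function.update_of_ne hj, u1_fst_ne hj]

lemma leE_x_u1_iff {i : Fin m} {x e : Expo m} (hx : x.1 i = false) :
    leE x (u1 i e) ↔ leE x e := by
  constructor
  · intro h j; refine ⟨fun hj => ?_, (h j).2⟩
    by_cases hji : j = i
    · subst hji; rw [hx] at hj; cases hj
    · have := (h j).1 hj; rwa [u1_fst_ne hji e] at this
  · intro h j; refine ⟨fun hj => ?_, (h j).2⟩
    by_cases hji : j = i
    · subst hji; exact u1_fst e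
    · rw [u1_fst_ne hji e]; exact (h j).1 hj

lemma subE_u1_left {i : Fin m} {x e : Expo m} (hx : x.1 i = false) :
    subE (u1 i e) x = u1 i (subE e x) := by
  unfold u1 subE
  refine Prod.ext ?_ ?_ <;> funext j <;> simp only
  · by_cases hj : j = i
    · subst hj; simp [hx]
    · simp [Function.update_of_ne hj]

lemma leE_u1_u1 {i : Fin m} {y e : Expo m} (hy : y.1 i = false) :
    leE (u1 i y) (u1 i e) ↔ leE y e := by
  rw [leE_u1_iff (u1_fst e), leE_x_u1_iff hy]

lemma subE_u1_u1 {i : Fin m} {y e : Expo m} (hy : y.1 i = false) (he : e.1 i = false) :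
    subE (u1 i e) (u1 i y) = subE e y := by
  unfold u1 subE
  refine Prod.ext ?_ ?_ <;> funext j <;> simp only
  · by_cases hj : j = i
    · subst hj; simp [hy, he]
    · simp [Function.update_of_ne hj]

lemma leE_fst_false {i : Fin m} {x e : Expo m} (h : leE x e) (he : e.1 i = false) :
    x.1 i = false := by
  cases hx : x.1 i
  · rfl
  · have := (h i).1 hx; rw [he] at this; cases this

lemma dp_mul [CharP K 2] (i : Fin m) (f g : TO K m) :
    dp i (mulO f g) = mulO (dp i f) g + mulO f (dp i g) := by
  have h2 : ∀ x : K, x + x = 0 := fun x => by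
    rw [← two_mul, show (2:K) = 0 from CharP.cast_eq_zero K 2, zero_mul]
  funext e
  rw [Pi.add_apply, mulO_le, mulO_le]
  show (if e.1 i = false then mulO f g (u1 i e) else 0) = _
  by_cases he : e.1 i = false
  · rw [if_pos he, mulO_le]
    have claim : ∀ x : Expo m,
        (if leE x (u1 i e) then f x * g (subE (u1 i e) x) else 0)
        = (if x.1 i = true then
             (if leE (fl1 i x) e then dp i f (fl1 i x) * g (subE e (fl1 i x)) else 0) else 0)
          + (if x.1 i = false then
             (if leE x e then f x * dp i g (subE e x) else 0) else 0) := by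
      intro x
      cases hx : x.1 i
      · rw [if_neg (show ¬(false = true) by simp), if_pos rfl, zero_add]
        have hd : dp i g (subE e x) = g (u1 i (subE e x)) := by
          simp only [dp]
          rw [if_pos (show (subE e x).1 i = false by
            show (e.1 i && !(x.1 i)) = false; rw [he]; rfl)]
          rfl
        simp only [leE_x_u1_iff hx, subE_u1_left hx, hd]
      · rw [if_pos rfl, if_neg (show ¬(true = false) by simp), add_zero]
        have hy : (fl1 i x).1 i = false := by rw [fl1_fst, hx]; rfl
        have hxy : u1 i (fl1 i x) = x := by
          rw [← fl1_of_false hy]; exact fl1_invol i x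
        have hd : dp i f (fl1 i x) = f (u1 i (fl1 i x)) := by
          simp only [dp]; rw [if_pos hy]; rfl
        conv_lhs => rw [← hxy]
        simp only [leE_u1_u1 hy, subE_u1_u1 hy he, hd]
    rw [Finset.sum_congr rfl (fun x _ => claim x), Finset.sum_add_distrib]
    congr 1
    · rw [← sum_fl1 i (fun x => if x.1 i = true then
          (if leE (fl1 i x) e then dp i f (fl1 i x) * g (subE e (fl1 i x)) else 0) else 0)]
      refine Finset.sum_congr rfl fun x _ => ?_
      simp only [fl1_invol i x, fl1_fst]
      cases hx : x.1 i
      · simp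
      · rw [if_neg (show ¬((!true) = true) by simp), if_neg (fun hle => by
          rw [leE_fst_false hle he] at hx; cases hx)]
    · refine Finset.sum_congr rfl fun x _ => ?_
      cases hx : x.1 i
      · rw [if_pos rfl]
      · rw [if_neg (show ¬(true = false) by simp), if_neg (fun hle => by
          rw [leE_fst_false hle he] at hx; cases hx)]
  · rw [if_neg he]
    have he' : e.1 i = true := by simpa using he
    have key : ∀ a : Expo m, (if leE a e then dp i f a * g (subE e a) else 0)
        = (if leE (fl1 i a) e then f (fl1 i a) * dp i g (subE e (fl1 i a)) else 0) := by
      intro a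
      cases ha : a.1 i
      · have hd1 : dp i f a = f (u1 i a) := by
          simp only [dp]; rw [if_pos ha]; rfl
        have hd2 : dp i g (subE e (u1 i a)) = g (u1 i (subE e (u1 i a))) := by
          simp only [dp]; rw [if_pos (subE_u1_fst e a)]; rfl
        simp only [fl1_of_false ha, leE_u1_iff he', hd1, hd2, u1_subE_u1 ha he']
      · have hz1 : dp i f a = 0 := by
          simp only [dp]; rw [if_neg (by simp [ha])]
        have hz2 : dp i g (subE e (fl1 i a)) = 0 := by
          simp only [dp]
          rw [if_neg (show ¬((subE e (fl1 i a)).1 i = false) by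
            show ¬((e.1 i && !((fl1 i a).1 i)) = false)
            rw [he', fl1_fst, ha]; simp)]
        rw [hz1, hz2, zero_mul, mul_zero, ite_self, ite_self]
    have hswap : (∑ a : Expo m, if leE a e then f a * dp i g (subE e a) else 0)
        = ∑ a : Expo m, if leE a e then dp i f a * g (subE e a) else 0 := by
      rw [← sum_fl1 i (fun a => if leE a e then f a * dp i g (subE e a) else 0)]
      exact Finset.sum_congr rfl fun a _ => (key a).symm
    rw [hswap, h2]

lemma dq_mul [CharP K 2] (i : Fin m) (f g : TO K m) :
    dq i (mulO f g) = mulO (dq i f) g + mulO f (dq i g) := by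
  rw [dq_eq_SW, SW_mul, dp_mul, SW_add, SW_mul, SW_mul, SW_SW f, SW_SW g,
    ← dq_eq_SW i f, ← dq_eq_SW i g]

/-! ### the elements 1 + pᵢ and 1 + qᵢ -/

def pE (i : Fin m) : Expo m := (fun j => decide (j = i), fun _ => false)
def qE (i : Fin m) : Expo m := (fun _ => false, fun j => decide (j = i))

def elP (i : Fin m) : TO K m := oneO + indic (pE i)
def elQ (i : Fin m) : TO K m := oneO + indic (qE i)

lemma SW_indic (a : Expo m) : SW (indic a : TO K m) = indic (swE a) := by
  funext e
  show (if (e.2, e.1) = a then (1:K) else 0) = if e = swE a then 1 else 0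
  refine if_congr ?_ rfl rfl
  constructor
  · intro h; rw [← h]; rfl
  · intro h; rw [h]; rfl

lemma SW_one : SW (oneO : TO K m) = oneO := by
  rw [oneO, SW_indic]; rfl

lemma SW_elP (i : Fin m) : SW (elP i : TO K m) = elQ i := by
  rw [elP, SW_add, SW_one, SW_indic]; rfl

lemma SW_elQ (i : Fin m) : SW (elQ i : TO K m) = elP i := by
  rw [← SW_elP, SW_SW]

lemma mp_eq (i : Fin m) (f : TO K m) : mp i f = mulO (elP i) f := by
  rw [elP, mulO_add_left, mulO_one_left]
  funext e
  show mp i f e = f e + mulO (indic (pE i)) f e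
  unfold mp
  congr 1
  rw [mulO_indic]
  have h1 : leE (pE i) e ↔ e.1 i = true := by
    constructor
    · intro h; exact (h i).1 (by simp [pE])
    · intro h j
      constructor
      · intro hj
        have : j = i := by simpa [pE] using hj
        subst this; exact h
      · intro hj; simp [pE] at hj
  have h2 : subE e (pE i) = (Function.update e.1 i false, e.2) := by
    unfold subE pE
    refine Prod.ext ?_ ?_ <;> funext j <;> simp only
    · by_cases hj : j = i
      · subst hj; simp
      · simp [hj, Function.update_of_ne hj]
    · simp
  rw [h2]
  exact if_congr h1.symm rfl rfl

lemma mq_eq (i : Fin m) (f : TO K m) : mq i f = mulO (elQ i) f := by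
  rw [mq_eq_SW, mp_eq, SW_mul, SW_elP, SW_SW]

lemma dp_indic_ne (i : Fin m) (a : Expo m) (h : a.1 i = false) :
    dp i (indic a : TO K m) = 0 := by
  funext e
  simp only [dp, indic]
  by_cases he : e.1 i = false
  · rw [if_pos he, if_neg, Pi.zero_apply]
    intro hc
    have := congrFun (congrArg Prod.fst hc) i
    simp [h] at this
  · rw [if_neg he]; rfl

lemma dp_indic_self (i : Fin m) : dp i (indic (pE i) : TO K m) = oneO := by
  funext e
  simp only [dp, indic, oneO]
  by_cases he : e.1 i = false
  · rw [if_pos he]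
    refine if_congr ?_ rfl rfl
    constructor
    · intro h
      have h1 := congrArg Prod.fst h
      have h2 := congrArg Prod.snd h
      refine Prod.ext ?_ h2
      funext j
      by_cases hj : j = i
      · subst hj; exact he
      · have := congrFun h1 j
        simp [Function.update_of_ne hj, pE, hj] at this
        simp [e0, this]
    · intro h
      subst h
      refine Prod.ext ?_ rfl
      funext j
      by_cases hj : j = i
      · subst hj; simp [pE, e0]
      · simp [pE, e0, hj, Function.update_of_ne hj]
  · rw [if_neg he]
    exact (if_neg (fun h => he (by rw [h]; rfl))).symm

lemma dp_one (i : Fin m) : dp i (oneO : TO K m) = 0 := by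
  rw [oneO]; exact dp_indic_ne i e0 rfl

lemma dp_elP_self (i : Fin m) : dp i (elP i : TO K m) = oneO := by
  rw [elP, dp_add, dp_one, dp_indic_self, zero_add]

lemma dp_elP_ne {i j : Fin m} (h : i ≠ j) : dp i (elP j : TO K m) = 0 := by
  rw [elP, dp_add, dp_one, dp_indic_ne i (pE j) (by simp [pE, h]), add_zero]

lemma dp_elQ (i j : Fin m) : dp i (elQ j : TO K m) = 0 := by
  rw [elQ, dp_add, dp_one, dp_indic_ne i (qE j) rfl, add_zero]

lemma dq_elQ_self (i : Fin m) : dq i (elQ i : TO K m) = oneO := by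
  rw [dq_eq_SW, SW_elQ, dp_elP_self, SW_one]

lemma dq_elQ_ne {i j : Fin m} (h : i ≠ j) : dq i (elQ j : TO K m) = 0 := by
  rw [dq_eq_SW, SW_elQ, dp_elP_ne h]
  funext e; rfl

lemma dq_elP (i j : Fin m) : dq i (elP j : TO K m) = 0 := by
  rw [dq_eq_SW, SW_elP, dp_elQ]
  funext e; rfl

/-! ### the derivations D, E on the ring OA -/

def toOA (f : TO K m) : OA K m := f

lemma toOA_mul (a b : TO K m) : toOA a * toOA b = toOA (K := K) (m := m) (mulO a b) := rfl
lemma toOA_add (a b : TO K m) : toOA a + toOA b = toOA (K := K) (m := m) (a + b) := rfl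
lemma toOA_zero : toOA (0 : TO K m) = 0 := rfl

def De (i : Fin m) (f : OA K m) : OA K m := toOA (mulO (elP i) (dp i f))
def Ee (i : Fin m) (f : OA K m) : OA K m := toOA (mulO (elQ i) (dq i f))

lemma De_def (i : Fin m) (f : OA K m) : De i f = toOA (elP i) * toOA (dp i f) := rfl
lemma Ee_def (i : Fin m) (f : OA K m) : Ee i f = toOA (elQ i) * toOA (dq i f) := rfl

variable [CharP K 2]

lemma De_mul (i : Fin m) (f g : OA K m) :
    De i (f * g) = De i f * g + f * De i g := by
  calc De i (f * g) = toOA (elP i) * toOA (dp i (mulO f g)) := rfl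
    _ = toOA (elP i) * (toOA (mulO (dp i f) g) + toOA (mulO f (dp i g))) := by
        exact congrArg (toOA (elP i) * ·) (congrArg toOA (dp_mul i f g))
    _ = toOA (elP i) * (toOA (dp i f) * toOA g + toOA f * toOA (dp i g)) := by
        rfl
    _ = (toOA (elP i) * toOA (dp i f)) * toOA g
        + toOA f * (toOA (elP i) * toOA (dp i g)) := by ring
    _ = De i f * g + f * De i g := rfl

lemma Ee_mul (i : Fin m) (f g : OA K m) :
    Ee i (f * g) = Ee i f * g + f * Ee i g := by
  calc Ee i (f * g) = toOA (elQ i) * toOA (dq i (mulO f g)) := rfl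
    _ = toOA (elQ i) * (toOA (mulO (dq i f) g) + toOA (mulO f (dq i g))) := by
        exact congrArg (toOA (elQ i) * ·) (congrArg toOA (dq_mul i f g))
    _ = toOA (elQ i) * (toOA (dq i f) * toOA g + toOA f * toOA (dq i g)) := by
        rfl
    _ = (toOA (elQ i) * toOA (dq i f)) * toOA g
        + toOA f * (toOA (elQ i) * toOA (dq i g)) := by ring
    _ = Ee i f * g + f * Ee i g := rfl

lemma De_add (i : Fin m) (f g : OA K m) : De i (f + g) = De i f + De i g := by
  show toOA (mulO (elP i) (dp i (f + g))) = _
  exact congrArg toOA ((congrArg (mulO (elP i)) (dp_add i f g)).trans (mulO_add_right _ _ _))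

lemma Ee_add (i : Fin m) (f g : OA K m) : Ee i (f + g) = Ee i f + Ee i g := by
  show toOA (mulO (elQ i) (dq i (f + g))) = _
  exact congrArg toOA ((congrArg (mulO (elQ i)) (dq_add i f g)).trans (mulO_add_right _ _ _))

lemma De_zero (i : Fin m) : De i (0 : OA K m) = 0 := by
  show toOA (mulO (elP i) (dp i (0 : TO K m))) = 0
  rw [dp_zero, mulO_zero_right]; rfl

lemma Ee_zero (i : Fin m) : Ee i (0 : OA K m) = 0 := by
  show toOA (mulO (elQ i) (dq i (0 : TO K m))) = 0
  rw [dq_zero, mulO_zero_right]; rfl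

lemma De_De (i j : Fin m) (f : OA K m) : De i (De j f) = De j (De i f) := by
  by_cases hij : i = j
  · subst hij; rfl
  · have key : ∀ i j : Fin m, i ≠ j →
        De i (De j f) = toOA (elP i) * (toOA (elP j) * toOA (dp i (dp j f))) := by
      intro i j h
      calc De i (De j f) = toOA (elP i) * toOA (dp i (mulO (elP j) (dp j f))) := rfl
        _ = toOA (elP i) * (toOA (mulO (dp i (elP j)) (dp j f))
              + toOA (mulO (elP j) (dp i (dp j f)))) := by rw [dp_mul, ← toOA_add]
        _ = toOA (elP i) * (toOA (elP j) * toOA (dp i (dp j f))) := by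
            rw [dp_elP_ne h, mulO_zero_left, toOA_zero, zero_add, ← toOA_mul]
    rw [key i j hij, key j i (Ne.symm hij), dp_dp_comm i j f]
    ring

lemma Ee_Ee (i j : Fin m) (f : OA K m) : Ee i (Ee j f) = Ee j (Ee i f) := by
  by_cases hij : i = j
  · subst hij; rfl
  · have key : ∀ i j : Fin m, i ≠ j →
        Ee i (Ee j f) = toOA (elQ i) * (toOA (elQ j) * toOA (dq i (dq j f))) := by
      intro i j h
      calc Ee i (Ee j f) = toOA (elQ i) * toOA (dq i (mulO (elQ j) (dq j f))) := rfl
        _ = toOA (elQ i) * (toOA (mulO (dq i (elQ j)) (dq j f))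
              + toOA (mulO (elQ j) (dq i (dq j f)))) := by rw [dq_mul, ← toOA_add]
        _ = toOA (elQ i) * (toOA (elQ j) * toOA (dq i (dq j f))) := by
            rw [dq_elQ_ne h, mulO_zero_left, toOA_zero, zero_add, ← toOA_mul]
    rw [key i j hij, key j i (Ne.symm hij), dq_dq_comm i j f]
    ring

lemma De_Ee (i j : Fin m) (f : OA K m) : De i (Ee j f) = Ee j (De i f) := by
  have h1 : De i (Ee j f) = toOA (elP i) * (toOA (elQ j) * toOA (dp i (dq j f))) := by
    calc De i (Ee j f) = toOA (elP i) * toOA (dp i (mulO (elQ j) (dq j f))) := rfl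
      _ = toOA (elP i) * (toOA (mulO (dp i (elQ j)) (dq j f))
            + toOA (mulO (elQ j) (dp i (dq j f)))) := by rw [dp_mul, ← toOA_add]
      _ = toOA (elP i) * (toOA (elQ j) * toOA (dp i (dq j f))) := by
          rw [dp_elQ, mulO_zero_left, toOA_zero, zero_add, ← toOA_mul]
  have h2 : Ee j (De i f) = toOA (elQ j) * (toOA (elP i) * toOA (dq j (dp i f))) := by
    calc Ee j (De i f) = toOA (elQ j) * toOA (dq j (mulO (elP i) (dp i f))) := rfl
      _ = toOA (elQ j) * (toOA (mulO (dq j (elP i)) (dp i f))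
            + toOA (mulO (elP i) (dq j (dp i f)))) := by rw [dq_mul, ← toOA_add]
      _ = toOA (elQ j) * (toOA (elP i) * toOA (dq j (dp i f))) := by
          rw [dq_elP, mulO_zero_left, toOA_zero, zero_add, ← toOA_mul]
  rw [h1, h2, dp_dq_comm i j f]
  ring

/-! ### the bracket on OA -/

lemma De_sum (j : Fin m) (s : Finset (Fin m)) (F : Fin m → OA K m) :
    De j (∑ i ∈ s, F i) = ∑ i ∈ s, De j (F i) := by
  classical
  induction s using Finset.induction_on with
  | empty => simpa using De_zero j
  | insert _ _ h ih => rw [Finset.sum_insert h, Finset.sum_insert h, De_add, ih]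

lemma Ee_sum (j : Fin m) (s : Finset (Fin m)) (F : Fin m → OA K m) :
    Ee j (∑ i ∈ s, F i) = ∑ i ∈ s, Ee j (F i) := by
  classical
  induction s using Finset.induction_on with
  | empty => simpa using Ee_zero j
  | insert _ _ h ih => rw [Finset.sum_insert h, Finset.sum_insert h, Ee_add, ih]

lemma toOA_sum (s : Finset (Fin m)) (F : Fin m → TO K m) :
    toOA (∑ i ∈ s, F i) = ∑ i ∈ s, toOA (F i) := by
  classical
  induction s using Finset.induction_on with
  | empty => exact toOA_zero
  | insert _ _ h ih => rw [Finset.sum_insert h, Finset.sum_insert h, ← toOA_add, ih]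

def brO (f g : OA K m) : OA K m := ∑ i : Fin m, (De i f * Ee i g + Ee i f * De i g)

lemma dp_toOA (i : Fin m) (f : TO K m) : dp i (toOA f) = dp i f := rfl
lemma dq_toOA (i : Fin m) (f : TO K m) : dq i (toOA f) = dq i f := rfl

lemma br13_eq (f g : TO K m) : toOA (br13 f g) = brO (toOA f) (toOA g) := by
  rw [br13, brO, toOA_sum]
  refine Finset.sum_congr rfl fun i _ => ?_
  rw [mp_eq, mq_eq, mulO_add_right, mulO_add_right]
  simp only [← toOA_mul, ← toOA_add]
  rw [De_def, Ee_def, De_def, Ee_def]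
  simp only [dp_toOA, dq_toOA]
  ring

lemma brO_alt (f : OA K m) : brO f f = 0 := by
  rw [brO]
  refine Finset.sum_eq_zero fun i _ => ?_
  rw [mul_comm (Ee i f) (De i f)]
  exact OA.add_self _

lemma brO_exp (x y z : OA K m) : brO (brO x y) z
    = ∑ j : Fin m, ∑ i : Fin m,
      (De j (De i x) * Ee i y * Ee j z + De i x * De j (Ee i y) * Ee j z
        + De j (Ee i x) * De i y * Ee j z + Ee i x * De j (De i y) * Ee j z
        + Ee j (De i x) * Ee i y * De j z + De i x * Ee j (Ee i y) * De j z
        + Ee j (Ee i x) * De i y * De j z + Ee i x * Ee j (De i y) * De j z) := by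
  rw [brO]
  refine Finset.sum_congr rfl fun j _ => ?_
  rw [show brO x y = ∑ i : Fin m, (De i x * Ee i y + Ee i x * De i y) from rfl,
    De_sum, Ee_sum, Finset.sum_mul, Finset.sum_mul, ← Finset.sum_add_distrib]
  refine Finset.sum_congr rfl fun i _ => ?_
  rw [De_add, De_mul, De_mul, Ee_add, Ee_mul, Ee_mul]
  ring

def W1 (x y z : OA K m) (i j : Fin m) : OA K m :=
  De j (De i x) * Ee i y * Ee j z + De i x * De j (Ee i y) * Ee j z
    + De j (Ee i x) * De i y * Ee j z + Ee i x * De j (De i y) * Ee j z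
    + Ee j (De i x) * Ee i y * De j z + De i x * Ee j (Ee i y) * De j z
    + Ee j (Ee i x) * De i y * De j z + Ee i x * Ee j (De i y) * De j z
    + De i y * De j (Ee i z) * Ee j x + Ee i y * De j (De i z) * Ee j x
    + De i y * Ee j (Ee i z) * De j x + Ee i y * Ee j (De i z) * De j x

def W2 (x y z : OA K m) (i j : Fin m) : OA K m :=
  De j (De i y) * Ee i z * Ee j x + De j (Ee i y) * De i z * Ee j x
    + Ee j (De i y) * Ee i z * De j x + Ee j (Ee i y) * De i z * De j x
    + De j (De i z) * Ee i x * Ee j y + De i z * De j (Ee i x) * Ee j y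
    + De j (Ee i z) * De i x * Ee j y + Ee i z * De j (De i x) * Ee j y
    + Ee j (De i z) * Ee i x * De j y + De i z * Ee j (Ee i x) * De j y
    + Ee j (Ee i z) * De i x * De j y + Ee i z * Ee j (De i x) * De j y

lemma W_swap (x y z : OA K m) (i j : Fin m) : W2 x y z i j = W1 x y z j i := by
  rw [W1, W2]
  rw [De_De i j x, De_De i j y, De_De i j z,
    De_Ee i j x, De_Ee i j y, De_Ee i j z,
    ← De_Ee j i x, ← De_Ee j i y, ← De_Ee j i z,
    Ee_Ee i j x, Ee_Ee i j y, Ee_Ee i j z]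
  ring

lemma jacO (x y z : OA K m) :
    brO (brO x y) z + brO (brO y z) x + brO (brO z x) y = 0 := by
  have step : brO (brO x y) z + brO (brO y z) x + brO (brO z x) y
      = ∑ j : Fin m, ∑ i : Fin m, (W1 x y z i j + W2 x y z i j) := by
    rw [brO_exp x y z, brO_exp y z x, brO_exp z x y,
      ← Finset.sum_add_distrib, ← Finset.sum_add_distrib]
    refine Finset.sum_congr rfl fun j _ => ?_
    rw [← Finset.sum_add_distrib, ← Finset.sum_add_distrib]
    refine Finset.sum_congr rfl fun i _ => ?_
    rw [W1, W2]
    ring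
  rw [step]
  have split : (∑ j : Fin m, ∑ i : Fin m, (W1 x y z i j + W2 x y z i j))
      = (∑ j : Fin m, ∑ i : Fin m, W1 x y z i j)
        + ∑ j : Fin m, ∑ i : Fin m, W2 x y z i j := by
    simp only [Finset.sum_add_distrib]
  rw [split]
  have hsw : (∑ j : Fin m, ∑ i : Fin m, W2 x y z i j)
      = ∑ j : Fin m, ∑ i : Fin m, W1 x y z i j := by
    rw [Finset.sum_congr rfl fun j _ => Finset.sum_congr rfl fun i (_ : i ∈ Finset.univ) =>
      W_swap x y z i j]
    exact Finset.sum_comm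
  rw [hsw]
  exact OA.add_self _


/-- over a field of characteristic 2, this bracket defines a Lie
algebra structure on the truncated polynomial algebra. -/
theorem stmt13 (K : Type*) [Field K] [CharP K 2] (m : ℕ) (hm : 1 ≤ m) :
    (∀ f : TO K m, br13 f f = 0) ∧
    (∀ f g h : TO K m,
      br13 (br13 f g) h + br13 (br13 g h) f + br13 (br13 h f) g = 0) := by
  constructor
  · intro f
    have h : toOA (br13 f f) = (0 : OA K m) := by rw [br13_eq, brO_alt]
    exact h
  · intro f g h
    have e1 : toOA (br13 (br13 f g) h) = brO (brO (toOA f) (toOA g)) (toOA h) := by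
      rw [br13_eq, br13_eq]
    have e2 : toOA (br13 (br13 g h) f) = brO (brO (toOA g) (toOA h)) (toOA f) := by
      rw [br13_eq, br13_eq]
    have e3 : toOA (br13 (br13 h f) g) = brO (brO (toOA h) (toOA f)) (toOA g) := by
      rw [br13_eq, br13_eq]
    have key : toOA (br13 (br13 f g) h) + toOA (br13 (br13 g h) f)
        + toOA (br13 (br13 h f) g) = (0 : OA K m) := by
      rw [e1, e2, e3]; exact jacO _ _ _
    exact key
end
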